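/- Strong convexity of linear-plus-KL objectives at their Gibbs minimizer: Let p be a probability density on ℝ^d, r : ℝ^d → ℝ a bounded measurable function, β > 0, and define F̃(q) := E_q[r] + β D_KL(q‖p). If q := e^{−r/β} p / ∫ e^{−r/β} p dx, then for every probability density q' absolutely continuous with respect to p with D_KL(q'‖p) < ∞, writing r_1 := dq/dp and r_2 := dq'/dp, one has F̃(q) ≤ F̃(q') − (β/2)·‖r_1 − r_2‖²_{L¹(p)}, where ‖r_1 − r_2‖_{L¹(p)} := ∫ |r_1 − r_2| dp. -/

import Mathlib

open MeasureTheory Real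

noncomputable section

/-- A probability density function w.r.t. the Lebesgue measure on ℝ^d. -/
def IsDensity {d : ℕ} (q : EuclideanSpace ℝ (Fin d) → ℝ) : Prop :=
  Measurable q ∧ (∀ x, 0 ≤ q x) ∧ (∫ x, q x) = 1

/-- Kullback–Leibler divergence between densities. -/
def KLd {d : ℕ} (q p : EuclideanSpace ℝ (Fin d) → ℝ) : ℝ :=
  ∫ x, q x * Real.log (q x / p x)

/-- The Gibbs density `e^{−r} p / ∫ e^{−r} p`. -/
def gibbsDensity {d : ℕ} (p r : EuclideanSpace ℝ (Fin d) → ℝ)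
    (x : EuclideanSpace ℝ (Fin d)) : ℝ :=
  Real.exp (-r x) * p x / ∫ y, Real.exp (-r y) * p y

/-- G(y) = (y/2)(e^y+1) - e^y + 1 is monotone on ℝ. -/
lemma G_mono : Monotone (fun y : ℝ => y / 2 * (Real.exp y + 1) - Real.exp y + 1) := by
  have hder : ∀ y : ℝ, HasDerivAt (fun y : ℝ => y / 2 * (Real.exp y + 1) - Real.exp y + 1)
      (Real.exp y * (y - 1 + Real.exp (-y)) / 2) y := by
    intro y
    have h1 : HasDerivAt (fun y : ℝ => y / 2 * (Real.exp y + 1) - Real.exp y + 1)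
        (1 / 2 * (Real.exp y + 1) + y / 2 * Real.exp y - Real.exp y) y :=
      ((((hasDerivAt_id y).div_const 2).mul ((Real.hasDerivAt_exp y).add_const 1)).sub
        (Real.hasDerivAt_exp y)).add_const 1
    convert h1 using 1
    rw [Real.exp_neg]
    have hx : Real.exp y ≠ 0 := Real.exp_ne_zero y
    field_simp
    ring
  apply monotone_of_deriv_nonneg
  · exact fun y => (hder y).differentiableAt
  · intro y
    rw [(hder y).deriv]
    have h : 0 ≤ y - 1 + Real.exp (-y) := by
      have := Real.add_one_le_exp (-y); linarith
    have h2 : (0:ℝ) < Real.exp y := Real.exp_pos y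
    positivity

/-- Key scalar inequality for Pinsker: `3(t-1)² ≤ (2t+4)(t log t - t + 1)` for `t ≥ 0`. -/
lemma key_ineq {t : ℝ} (ht : 0 ≤ t) :
    3 * (t - 1) ^ 2 ≤ (2 * t + 4) * (t * Real.log t - t + 1) := by
  set g : ℝ → ℝ := fun t => (2 * t + 4) * (t * Real.log t - t + 1) - 3 * (t - 1) ^ 2 with hg
  suffices h : 0 ≤ g t by simpa [hg] using h
  have hder : ∀ x : ℝ, 0 < x → HasDerivAt g
      (8 * (Real.log x / 2 * (Real.exp (Real.log x) + 1) - Real.exp (Real.log x) + 1)) x := by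
    intro x hx
    have h1 : HasDerivAt g
        (2 * (x * Real.log x - x + 1) + (2 * x + 4) * (Real.log x + 1 - 1)
          - 3 * (2 * (x - 1))) x := by
      have hml : HasDerivAt (fun y : ℝ => y * Real.log y - y + 1) (Real.log x + 1 - 1) x :=
        ((Real.hasDerivAt_mul_log (ne_of_gt hx)).sub (hasDerivAt_id x)).add_const 1
      have hl : HasDerivAt (fun y : ℝ => 2 * y + 4) 2 x := by
        simpa using ((hasDerivAt_id x).const_mul 2).add_const 4
      have hsq : HasDerivAt (fun y : ℝ => 3 * (y - 1) ^ 2) (3 * (2 * (x - 1))) x := by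
        have h0 : HasDerivAt (fun y : ℝ => (y - 1) ^ 2) (2 * (x - 1) ^ 1 * 1) x :=
          (((hasDerivAt_id x).sub_const 1)).pow 2
        simpa [mul_comm, mul_assoc, mul_left_comm] using h0.const_mul 3
      exact (hl.mul hml).sub hsq
    convert h1 using 1
    rw [Real.exp_log hx]
    ring
  have hcont : Continuous g := by
    have := Real.continuous_mul_log
    continuity
  have hG0 : (fun y : ℝ => y / 2 * (Real.exp y + 1) - Real.exp y + 1) 0 = 0 := by simp
  have hg1 : g 1 = 0 := by simp [hg]
  rcases le_or_gt t 1 with h1 | h1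
  · -- antitone on [0,1]
    have hanti : AntitoneOn g (Set.Icc 0 1) := by
      apply antitoneOn_of_deriv_nonpos (convex_Icc 0 1) hcont.continuousOn
      · intro x hx
        rw [interior_Icc] at hx
        exact ((hder x hx.1).differentiableAt).differentiableWithinAt
      · intro x hx
        rw [interior_Icc] at hx
        rw [(hder x hx.1).deriv]
        have hlog : Real.log x ≤ 0 := Real.log_nonpos hx.1.le hx.2.le
        have := G_mono hlog
        rw [hG0] at this
        linarith
    have := hanti ⟨ht, h1⟩ (Set.right_mem_Icc.2 zero_le_one) h1
    rw [hg1] at this; linarith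
  · -- monotone on [1,∞)
    have hmono : MonotoneOn g (Set.Ici 1) := by
      apply monotoneOn_of_deriv_nonneg (convex_Ici 1) hcont.continuousOn
      · intro x hx
        rw [interior_Ici] at hx
        exact ((hder x (lt_trans one_pos hx)).differentiableAt).differentiableWithinAt
      · intro x hx
        rw [interior_Ici] at hx
        rw [(hder x (lt_trans one_pos hx)).deriv]
        have hlog : 0 ≤ Real.log x := Real.log_nonneg hx.le
        have := G_mono hlog
        rw [hG0] at this
        linarith
    have := hmono (Set.mem_Ici.2 le_rfl) (le_of_lt h1 : (1:ℝ) ≤ t) h1.le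
    rw [hg1] at this; linarith

lemma pt_helper {A B : ℝ} (hA : 0 < A) (hB : 0 ≤ B) :
    0 ≤ B * Real.log (B / A) - B + A ∧
    (A - B) ^ 2 ≤ (B * Real.log (B / A) - B + A) * ((2 * B + 4 * A) / 3) := by
  set t := B / A with htdef
  have ht0 : 0 ≤ t := div_nonneg hB hA.le
  have hBt : B = t * A := by rw [htdef]; field_simp
  rcases eq_or_lt_of_le hB with h0 | h0
  · have ht' : t = 0 := by rw [htdef, ← h0]; simp
    rw [← h0, ht']
    constructor
    · simpa using hA.le
    · nlinarith [sq_nonneg A]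
  · have ht' : 0 < t := div_pos h0 hA
    have hkey := key_ineq ht0
    have hnn : 0 ≤ t * Real.log t - t + 1 := by nlinarith [sq_nonneg (t - 1)]
    rw [hBt]
    constructor
    · nlinarith
    · have hmul := mul_le_mul_of_nonneg_left hkey (by positivity : (0:ℝ) ≤ A ^ 2 / 3)
      nlinarith [hmul]

set_option maxHeartbeats 1000000 in
lemma pinsker {d : ℕ} {a b : EuclideanSpace ℝ (Fin d) → ℝ}
    (ha : Measurable a) (hb : Measurable b) (ha0 : ∀ x, 0 ≤ a x) (hb0 : ∀ x, 0 ≤ b x)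
    (hai : Integrable a) (hbi : Integrable b)
    (ha1 : (∫ x, a x) = 1) (hb1 : (∫ x, b x) = 1)
    (hab : ∀ x, a x = 0 → b x = 0)
    (hint : Integrable (fun x => b x * Real.log (b x / a x))) :
    (∫ x, |a x - b x|) ^ 2 ≤ 2 * ∫ x, b x * Real.log (b x / a x) := by
  classical
  set φ : EuclideanSpace ℝ (Fin d) → ℝ :=
    fun x => b x * Real.log (b x / a x) - b x + a x with hφ
  set w : EuclideanSpace ℝ (Fin d) → ℝ := fun x => (2 * b x + 4 * a x) / 3 with hw
  have hpt : ∀ x, 0 ≤ φ x ∧ (a x - b x) ^ 2 ≤ φ x * w x := by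
    intro x
    rcases eq_or_lt_of_le (ha0 x) with h0 | h0
    · have hbx : b x = 0 := hab x h0.symm
      constructor
      · simp [hφ, hbx, ← h0]
      · simp [hφ, hw, hbx, ← h0]
    · exact pt_helper h0 (hb0 x)
  have hφ0 : ∀ x, 0 ≤ φ x := fun x => (hpt x).1
  have hφi : Integrable φ := (hint.sub hbi).add hai
  have hφm : Measurable φ := ((hb.mul ((hb.div ha).log)).sub hb).add ha
  have hw0 : ∀ x, 0 ≤ w x := fun x => by
    have := ha0 x; have := hb0 x; rw [hw]; positivity
  have hwi : Integrable w := ((hbi.const_mul 2).add (hai.const_mul 4)).div_const 3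
  have hwm : Measurable w := ((hb.const_mul 2).add (ha.const_mul 4)).div_const 3
  have hwint : (∫ x, w x) = 2 := by
    simp only [hw]
    rw [integral_div, integral_add (hbi.const_mul 2) (hai.const_mul 4),
      integral_const_mul, integral_const_mul, ha1, hb1]
    norm_num
  have hK0 : 0 ≤ ∫ x, φ x := integral_nonneg hφ0
  have hφint : (∫ x, φ x) = ∫ x, b x * Real.log (b x / a x) := by
    have h1 : Integrable (fun x => b x * Real.log (b x / a x) - b x) := hint.sub hbi
    simp only [hφ]
    rw [integral_add h1 hai, integral_sub hint hbi, ha1, hb1]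
    ring
  -- Cauchy-Schwarz via lintegral Hölder
  set F : EuclideanSpace ℝ (Fin d) → ENNReal := fun x => ENNReal.ofReal (Real.sqrt (φ x)) with hF
  set G : EuclideanSpace ℝ (Fin d) → ENNReal := fun x => ENNReal.ofReal (Real.sqrt (w x)) with hG
  have hconj : Real.HolderConjugate 2 2 := Real.HolderConjugate.two_two
  have hFm : AEMeasurable F := (hφm.sqrt.ennreal_ofReal).aemeasurable
  have hGm : AEMeasurable G := (hwm.sqrt.ennreal_ofReal).aemeasurable
  have holder := ENNReal.lintegral_mul_le_Lp_mul_Lq volume hconj hFm hGm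
  have hF2 : (∫⁻ x, F x ^ (2:ℝ)) = ENNReal.ofReal (∫ x, φ x) := by
    rw [ofReal_integral_eq_lintegral_ofReal hφi (Filter.Eventually.of_forall hφ0)]
    refine lintegral_congr fun x => ?_
    rw [hF, ENNReal.ofReal_rpow_of_nonneg (Real.sqrt_nonneg _) (by norm_num)]
    congr 1
    rw [Real.rpow_two, Real.sq_sqrt (hφ0 x)]
  have hG2 : (∫⁻ x, G x ^ (2:ℝ)) = ENNReal.ofReal 2 := by
    have hgg : (∫⁻ x, G x ^ (2:ℝ)) = ENNReal.ofReal (∫ x, w x) := by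
      rw [ofReal_integral_eq_lintegral_ofReal hwi (Filter.Eventually.of_forall hw0)]
      refine lintegral_congr fun x => ?_
      rw [hG, ENNReal.ofReal_rpow_of_nonneg (Real.sqrt_nonneg _) (by norm_num)]
      congr 1
      rw [Real.rpow_two, Real.sq_sqrt (hw0 x)]
    rw [hgg, hwint]
  have habs : Integrable (fun x => |a x - b x|) := (hai.sub hbi).abs
  have hTlin : ENNReal.ofReal (∫ x, |a x - b x|) = ∫⁻ x, ENNReal.ofReal (|a x - b x|) :=
    ofReal_integral_eq_lintegral_ofReal habs (Filter.Eventually.of_forall fun x => abs_nonneg _)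
  have hptwise : ∀ x, ENNReal.ofReal (|a x - b x|) ≤ (F * G) x := by
    intro x
    have h1 : |a x - b x| ≤ Real.sqrt (φ x) * Real.sqrt (w x) := by
      calc |a x - b x| = Real.sqrt ((a x - b x) ^ 2) := (Real.sqrt_sq_eq_abs _).symm
        _ ≤ Real.sqrt (φ x * w x) := Real.sqrt_le_sqrt (hpt x).2
        _ = Real.sqrt (φ x) * Real.sqrt (w x) := Real.sqrt_mul (hφ0 x) _
    calc ENNReal.ofReal (|a x - b x|) ≤ ENNReal.ofReal (Real.sqrt (φ x) * Real.sqrt (w x)) :=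
          ENNReal.ofReal_le_ofReal h1
      _ = (F * G) x := by simp [hF, hG, ENNReal.ofReal_mul (Real.sqrt_nonneg _)]
  have hchain : ENNReal.ofReal (∫ x, |a x - b x|) ≤
      ENNReal.ofReal (∫ x, φ x) ^ ((1:ℝ)/2) * ENNReal.ofReal 2 ^ ((1:ℝ)/2) := by
    rw [hTlin]
    calc (∫⁻ x, ENNReal.ofReal (|a x - b x|)) ≤ ∫⁻ x, (F * G) x :=
          lintegral_mono hptwise
      _ ≤ (∫⁻ x, F x ^ (2:ℝ)) ^ ((1:ℝ)/2) * (∫⁻ x, G x ^ (2:ℝ)) ^ ((1:ℝ)/2) := holder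
      _ = ENNReal.ofReal (∫ x, φ x) ^ ((1:ℝ)/2) * ENNReal.ofReal 2 ^ ((1:ℝ)/2) := by
          rw [hF2, hG2]
  -- convert back to reals
  have hrpow : ENNReal.ofReal (∫ x, φ x) ^ ((1:ℝ)/2) * ENNReal.ofReal 2 ^ ((1:ℝ)/2)
      = ENNReal.ofReal ((∫ x, φ x) ^ ((1:ℝ)/2) * (2:ℝ) ^ ((1:ℝ)/2)) := by
    rw [ENNReal.ofReal_rpow_of_nonneg hK0 (by norm_num),
      ENNReal.ofReal_rpow_of_nonneg (by norm_num : (0:ℝ) ≤ 2) (by norm_num),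
      ← ENNReal.ofReal_mul (by positivity)]
  rw [hrpow] at hchain
  have hT := (ENNReal.ofReal_le_ofReal_iff (by positivity)).mp hchain
  have hTnn : 0 ≤ ∫ x, |a x - b x| := integral_nonneg fun x => abs_nonneg _
  have hs1 : (∫ x, φ x) ^ ((1:ℝ)/2) = Real.sqrt (∫ x, φ x) := (Real.sqrt_eq_rpow _).symm
  have hs2 : (2:ℝ) ^ ((1:ℝ)/2) = Real.sqrt 2 := (Real.sqrt_eq_rpow _).symm
  rw [hs1, hs2] at hT
  have := Real.sq_sqrt hK0
  have h2 := Real.sq_sqrt (by norm_num : (0:ℝ) ≤ 2)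
  calc (∫ x, |a x - b x|) ^ 2 ≤ (Real.sqrt (∫ x, φ x) * Real.sqrt 2) ^ 2 := by
        apply pow_le_pow_left₀ hTnn hT
    _ = 2 * ∫ x, φ x := by rw [mul_pow]; rw [this, h2]; ring
    _ = 2 * ∫ x, b x * Real.log (b x / a x) := by rw [hφint]

set_option maxHeartbeats 1000000 in
/-- Strong convexity of linear-plus-KL objectives at their Gibbs minimizer:
if `q = e^{−r/β} p / ∫ e^{−r/β} p`, then
`F̃(q) ≤ F̃(q') − (β/2) ‖dq/dp − dq'/dp‖²_{L¹(p)}`. -/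
theorem gibbs_strong_convexity
    {d : ℕ} (p r : EuclideanSpace ℝ (Fin d) → ℝ) (β C : ℝ)
    (hβ : 0 < β) (hp : IsDensity p) (hr : Measurable r) (hrb : ∀ x, |r x| ≤ C)
    (q' : EuclideanSpace ℝ (Fin d) → ℝ)
    (hq' : IsDensity q') (hac : ∀ x, p x = 0 → q' x = 0)
    (hKL : Integrable (fun x => q' x * Real.log (q' x / p x))) :
    (∫ x, r x * gibbsDensity p (fun y => r y / β) x)
        + β * KLd (gibbsDensity p (fun y => r y / β)) p
      ≤ (∫ x, r x * q' x) + β * KLd q' p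
        - (β / 2) *
          (∫ x, |gibbsDensity p (fun y => r y / β) x / p x - q' x / p x| * p x) ^ 2 := by
  obtain ⟨hpm, hp0, hp1⟩ := hp
  obtain ⟨hq'm, hq'0, hq'1⟩ := hq'
  have hC0 : 0 ≤ C := le_trans (abs_nonneg _) (hrb (0 : EuclideanSpace ℝ (Fin d)))
  have hpint : Integrable p := by
    by_contra h
    rw [integral_undef h] at hp1; norm_num at hp1
  have hq'int : Integrable q' := by
    by_contra h
    rw [integral_undef h] at hq'1; norm_num at hq'1
  set e : EuclideanSpace ℝ (Fin d) → ℝ := fun x => Real.exp (-(r x / β)) with he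
  have he_pos : ∀ x, 0 < e x := fun x => Real.exp_pos _
  have he_ub : ∀ x, e x ≤ Real.exp (C / β) := by
    intro x
    apply Real.exp_le_exp.2
    have h1 : -C ≤ r x := (abs_le.1 (hrb x)).1
    calc -(r x / β) = (-(r x)) / β := by ring
      _ ≤ C / β := (div_le_div_iff_of_pos_right hβ).2 (by linarith)
  have he_lb : ∀ x, Real.exp (-(C / β)) ≤ e x := by
    intro x
    apply Real.exp_le_exp.2
    have h1 : r x ≤ C := (abs_le.1 (hrb x)).2
    calc -(C / β) = (-C) / β := by ring
      _ ≤ (-(r x)) / β := (div_le_div_iff_of_pos_right hβ).2 (by linarith)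
      _ = -(r x / β) := by ring
  have hem : Measurable e := (Real.measurable_exp.comp ((hr.div_const β).neg))
  have hepi : Integrable (fun x => e x * p x) := by
    apply hpint.bdd_mul hem.aestronglyMeasurable
    exact Filter.Eventually.of_forall fun x => by
      rw [Real.norm_eq_abs, abs_of_pos (he_pos x)]; exact he_ub x
  set Z : ℝ := ∫ x, e x * p x with hZ
  have hZlb : Real.exp (-(C / β)) ≤ Z := by
    have h1 : (∫ x, Real.exp (-(C / β)) * p x) = Real.exp (-(C / β)) := by
      rw [integral_const_mul, hp1, mul_one]
    rw [hZ, ← h1]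
    exact integral_mono (hpint.const_mul _) hepi fun x =>
      mul_le_mul_of_nonneg_right (he_lb x) (hp0 x)
  have hZpos : 0 < Z := lt_of_lt_of_le (Real.exp_pos _) hZlb
  set q : EuclideanSpace ℝ (Fin d) → ℝ := fun x => e x * p x / Z with hq
  have hgq : (gibbsDensity p fun y => r y / β) = q := rfl
  have hq0 : ∀ x, 0 ≤ q x := fun x => by
    rw [hq]; have := he_pos x; have := hp0 x; positivity
  have hqm : Measurable q := (hem.mul hpm).div_const Z
  have hqi : Integrable q := hepi.div_const Z
  have hq1 : (∫ x, q x) = 1 := by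
    rw [hq]
    simp only [integral_div]
    exact div_self hZpos.ne'
  have hq_zero : ∀ x, q x = 0 ↔ p x = 0 := by
    intro x
    rw [hq]
    constructor
    · intro h
      rcases mul_eq_zero.1 (div_eq_zero_iff.1 h |>.resolve_right hZpos.ne') with h | h
      · exact absurd h (he_pos x).ne'
      · exact h
    · intro h; simp [hq, h]
  have hqab : ∀ x, q x = 0 → q' x = 0 := fun x h => hac x ((hq_zero x).1 h)
  -- integrability of r·q and r·q'
  have hrq : Integrable (fun x => r x * q x) := by
    apply Integrable.mono' (hpint.const_mul (C * (Real.exp (C / β) / Z)))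
      ((hr.mul hqm).aestronglyMeasurable)
    refine Filter.Eventually.of_forall fun x => ?_
    rw [Real.norm_eq_abs, Pi.mul_apply, abs_mul]
    have hqb : q x ≤ Real.exp (C / β) / Z * p x := by
      rw [hq, div_mul_eq_mul_div]
      exact (div_le_div_iff_of_pos_right hZpos).2 (mul_le_mul_of_nonneg_right (he_ub x) (hp0 x))
    have h1 : |q x| = q x := abs_of_nonneg (hq0 x)
    rw [h1]
    calc |r x| * q x ≤ C * (Real.exp (C / β) / Z * p x) :=
          mul_le_mul (hrb x) hqb (hq0 x) hC0
      _ = C * (Real.exp (C / β) / Z) * p x := by ring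
  have hrq' : Integrable (fun x => r x * q' x) := by
    apply Integrable.mono' (hq'int.const_mul C) ((hr.mul hq'm).aestronglyMeasurable)
    refine Filter.Eventually.of_forall fun x => ?_
    rw [Real.norm_eq_abs, Pi.mul_apply, abs_mul, abs_of_nonneg (hq'0 x)]
    exact mul_le_mul_of_nonneg_right (hrb x) (hq'0 x)
  -- Step 1: value at the Gibbs measure
  have hKLq : KLd q p = -(1/β) * (∫ x, r x * q x) - Real.log Z := by
    have hdec : (fun x => q x * Real.log (q x / p x))
        = fun x => -(1/β) * (r x * q x) - Real.log Z * q x := by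
      funext x
      rcases eq_or_lt_of_le (hp0 x) with h0 | h0
      · have : q x = 0 := (hq_zero x).2 h0.symm
        rw [this]; ring
      · have hqp : q x / p x = e x / Z := by
          rw [hq]; field_simp
        rw [hqp, Real.log_div (he_pos x).ne' hZpos.ne', he, Real.log_exp]
        ring
    rw [KLd, hdec, integral_sub ((hrq.const_mul _)) (hqi.const_mul _),
      integral_const_mul, integral_const_mul, hq1, mul_one]
  -- Step 2: pointwise decomposition of log(q'/q)
  have hdec2 : (fun x => q' x * Real.log (q' x / q x))
      = fun x => q' x * Real.log (q' x / p x)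
        + ((1/β) * (r x * q' x) + Real.log Z * q' x) := by
    funext x
    rcases eq_or_lt_of_le (hq'0 x) with h0 | h0
    · rw [← h0]; ring
    · have hpx : 0 < p x := by
        rcases eq_or_lt_of_le (hp0 x) with h1 | h1
        · exact absurd (hac x h1.symm) h0.ne'
        · exact h1
      have hqx : 0 < q x := by
        rw [hq]; have := he_pos x; positivity
      have hratio : q' x / q x = (q' x / p x) * (Z * Real.exp (r x / β)) := by
        rw [hq, he]
        have hx : Real.exp (r x / β) * Real.exp (-r x / β) = 1 := by
          rw [← Real.exp_add, show r x / β + -r x / β = 0 by ring, Real.exp_zero]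
        field_simp
        rw [neg_div] at hx
        linear_combination -hx
      rw [hratio, Real.log_mul (by positivity) (by positivity),
        Real.log_mul hZpos.ne' (Real.exp_pos _).ne', Real.log_exp]
      ring
  have hKL2int : Integrable (fun x => q' x * Real.log (q' x / q x)) := by
    rw [hdec2]
    exact hKL.add ((hrq'.const_mul _).add (hq'int.const_mul _))
  have hKL2val : (∫ x, q' x * Real.log (q' x / q x))
      = KLd q' p + (1/β) * (∫ x, r x * q' x) + Real.log Z := by
    have hI1 : Integrable (fun x => (1/β) * (r x * q' x)) := hrq'.const_mul _
    have hI2 : Integrable (fun x => Real.log Z * q' x) := hq'int.const_mul _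
    have hI12 : Integrable (fun x => (1/β) * (r x * q' x) + Real.log Z * q' x) := hI1.add hI2
    have e1 : (∫ x, (q' x * Real.log (q' x / p x) + ((1/β) * (r x * q' x) + Real.log Z * q' x)))
        = (∫ x, q' x * Real.log (q' x / p x))
          + ∫ x, ((1/β) * (r x * q' x) + Real.log Z * q' x) := integral_add hKL hI12
    have e2 : (∫ x, ((1/β) * (r x * q' x) + Real.log Z * q' x))
        = (∫ x, (1/β) * (r x * q' x)) + ∫ x, Real.log Z * q' x := integral_add hI1 hI2
    rw [hdec2, e1, e2, integral_const_mul, integral_const_mul, hq'1, mul_one, KLd]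
    ring
  -- Pinsker
  have hpins := pinsker hqm hq'm hq0 hq'0 hqi hq'int hq1 hq'1 hqab hKL2int
  -- rewrite the L¹ distance
  have hTrw : (∫ x, |q x / p x - q' x / p x| * p x) = ∫ x, |q x - q' x| := by
    refine integral_congr_ae (Filter.Eventually.of_forall fun x => ?_)
    show |q x / p x - q' x / p x| * p x = |q x - q' x|
    rcases eq_or_lt_of_le (hp0 x) with h0 | h0
    · have h1 : q x = 0 := (hq_zero x).2 h0.symm
      have h2 : q' x = 0 := hac x h0.symm
      rw [← h0, h1, h2]; simp
    · rw [div_sub_div_same, abs_div, abs_of_pos h0, div_mul_cancel₀ _ h0.ne']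
  have hKL2nn : (∫ x, |q x - q' x|) ^ 2 ≤ 2 * ∫ x, q' x * Real.log (q' x / q x) := hpins
  rw [hgq, hTrw, hKLq]
  rw [hKL2val] at hKL2nn
  have h2 : β / 2 * (∫ x, |q x - q' x|) ^ 2
      ≤ β * KLd q' p + (∫ x, r x * q' x) + β * Real.log Z := by
    have hm := mul_le_mul_of_nonneg_left hKL2nn (le_of_lt (half_pos hβ))
    have heq : β / 2 * (2 * (KLd q' p + 1/β * (∫ x, r x * q' x) + Real.log Z))
        = β * KLd q' p + (∫ x, r x * q' x) + β * Real.log Z := by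
      field_simp
    linarith [hm, heq.le, heq.ge]
  have hL : (∫ x, r x * q x) + β * (-(1/β) * (∫ x, r x * q x) - Real.log Z)
      = -(β * Real.log Z) := by
    field_simp
    ring
  linarith [h2, hL.le, hL.ge]

end
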